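/- Let d ≥ 2 be an integer, ω = exp(2πi/d), and let |Φ^{n,m}⟩ = (1/√d) Σ_{j=0}^{d−1} ω^{mj} |j⟩ ⊗ |(j+n) mod d⟩ for n, m ∈ ZMod d. Let p : (ZMod d) × (ZMod d) → ℝ be nonnegative with Σ_{n,m} p(n,m) = 1 and p(0,0) > 1/d, and let ρ = Σ_{n,m} p(n,m) |Φ^{n,m}⟩⟨Φ^{n,m}|, viewed as a matrix indexed by (Fin d) × (Fin d). Define the partial transpose ρ^{T_B} entrywise by (ρ^{T_B})_{(i,j),(k,l)} = ρ_{(i,l),(k,j)}. Then ρ^{T_B} is not positive semidefinite, i.e., there exists a vector v ∈ ℂ^{d·d} with ⟨v, ρ^{T_B} v⟩ having negative real part. -/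

import Mathlib

open Matrix

/-- Section 2 distillability threshold: a two-qudit Bell-diagonal state with
entanglement fidelity `p(0,0) > 1/d` has non-positive partial transpose: there
is a vector `v` with `⟨v, ρ^{T_B} v⟩` of negative real part. -/
theorem bell_diagonal_npt (d : ℕ) (hd : 2 ≤ d) [NeZero d]
    (p : ZMod d × ZMod d → ℝ) (hp : ∀ x, 0 ≤ p x)
    (hsum : ∑ x : ZMod d × ZMod d, p x = 1)
    (hfid : p (0, 0) > 1 / d) :
    let ω : ℂ := Complex.exp (2 * Real.pi * Complex.I / d)
    let Φ : ZMod d × ZMod d → ZMod d × ZMod d → ℂ := fun nm x =>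
      (1 / Real.sqrt d : ℝ) * (if x.2 = x.1 + nm.1 then ω ^ (nm.2.val * x.1.val) else 0)
    let ρ : Matrix (ZMod d × ZMod d) (ZMod d × ZMod d) ℂ := fun x y =>
      ∑ nm : ZMod d × ZMod d, (p nm : ℂ) * Φ nm x * (starRingEnd ℂ) (Φ nm y)
    let ρTB : Matrix (ZMod d × ZMod d) (ZMod d × ZMod d) ℂ := fun x y =>
      ρ (x.1, y.2) (y.1, x.2)
    ∃ v : ZMod d × ZMod d → ℂ, (star v ⬝ᵥ ρTB.mulVec v).re < 0 := by
  intro ω Φ ρ ρTB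
  have hd0 : (d : ℝ) ≠ 0 := Nat.cast_ne_zero.mpr (NeZero.ne d)
  have hdpos : (0 : ℝ) < d := by positivity
  have hsqrt_pos : (0 : ℝ) < Real.sqrt d := Real.sqrt_pos.mpr hdpos
  have hsqrt_ne : Real.sqrt d ≠ 0 := ne_of_gt hsqrt_pos
  have hprim : IsPrimitiveRoot ω d := Complex.isPrimitiveRoot_exp d (NeZero.ne d)
  have hωd : ω ^ d = 1 := hprim.pow_eq_one
  -- |ω|^2 = 1, i.e. ω^k * conj (ω^k) = 1
  have hconj : ∀ k : ℕ, ω ^ k * (starRingEnd ℂ) (ω ^ k) = 1 := by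
    intro k
    have habs : ω * (starRingEnd ℂ) ω = 1 := by
      rw [Complex.mul_conj]
      norm_cast
      simp only [ω]
      rw [Complex.normSq_eq_norm_sq, Complex.norm_exp]
      have : (2 * ↑Real.pi * Complex.I / ↑d).re = 0 := by
        simp [Complex.div_re, Complex.mul_re, Complex.I_re, Complex.I_im]
      rw [this, Real.exp_zero]; norm_num
    rw [map_pow, ← mul_pow, habs, one_pow]
  -- geometric sum of roots of unity
  have hgeom : ∀ m : ZMod d, m ≠ 0 → ∑ j : ZMod d, ω ^ (m.val * j.val) = 0 := by
    intro m hm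
    have h1 : ∑ j : ZMod d, ω ^ (m.val * j.val)
        = ∑ i ∈ Finset.range d, (ω ^ m.val) ^ i :=
      Finset.sum_nbij' (fun a => a.val) (fun b => (b : ZMod d))
        (fun a _ => Finset.mem_range.mpr (ZMod.val_lt a))
        (fun b _ => Finset.mem_univ _)
        (fun a _ => ZMod.natCast_rightInverse a)
        (fun b hb => ZMod.val_cast_of_lt (Finset.mem_range.mp hb))
        (fun a _ => by rw [pow_mul])
    have hne : ω ^ m.val ≠ 1 := by
      intro h
      have hdvd := (hprim.pow_eq_one_iff_dvd m.val).mp h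
      have hv : m.val < d := ZMod.val_lt m
      have hv0 : m.val ≠ 0 := fun h0 => hm ((ZMod.val_eq_zero m).mp h0)
      have := Nat.le_of_dvd (Nat.pos_of_ne_zero hv0) hdvd
      omega
    rw [h1, geom_sum_eq hne]
    have hpow : (ω ^ m.val) ^ d = 1 := by
      rw [← pow_mul, mul_comm, pow_mul, hωd, one_pow]
    rw [hpow]; simp
  -- normalization of Bell states
  have L1 : ∀ nm : ZMod d × ZMod d,
      ∑ x : ZMod d × ZMod d, Φ nm x * (starRingEnd ℂ) (Φ nm x) = 1 := by
    intro nm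
    rw [Fintype.sum_prod_type]
    have hinner : ∀ a : ZMod d, ∑ b : ZMod d, Φ nm (a, b) * (starRingEnd ℂ) (Φ nm (a, b))
        = 1 / (d : ℂ) := by
      intro a
      have hsingle : ∀ b : ZMod d, Φ nm (a, b) * (starRingEnd ℂ) (Φ nm (a, b))
          = if b = a + nm.1 then 1 / (d : ℂ) else 0 := by
        intro b
        show ((1 / Real.sqrt d : ℝ) : ℂ) * _ * (starRingEnd ℂ) (((1 / Real.sqrt d : ℝ) : ℂ) * _) = _
        by_cases hb : b = a + nm.1
        · simp only [hb, eq_self_iff_true, if_true]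
          rw [_root_.map_mul, Complex.conj_ofReal]
          have hre : ((1 / Real.sqrt d : ℝ) : ℂ) * (ω ^ (nm.2.val * a.val))
              * (((1 / Real.sqrt d : ℝ) : ℂ) * (starRingEnd ℂ) (ω ^ (nm.2.val * a.val)))
              = ((1 / Real.sqrt d : ℝ) : ℂ) * ((1 / Real.sqrt d : ℝ) : ℂ)
                * (ω ^ (nm.2.val * a.val) * (starRingEnd ℂ) (ω ^ (nm.2.val * a.val))) := by ring
          rw [hre, hconj, mul_one]
          
          norm_cast
          rw [div_mul_div_comm, one_mul, Real.mul_self_sqrt (le_of_lt hdpos)]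
          push_cast
          ring
        · simp [hb]
      rw [Finset.sum_congr rfl (fun b _ => hsingle b), Finset.sum_ite_eq' Finset.univ (a + nm.1)]
      simp
    rw [Finset.sum_congr rfl (fun a _ => hinner a), Finset.sum_const, Finset.card_univ,
      ZMod.card, nsmul_eq_mul]
    field_simp
    exact div_self (Nat.cast_ne_zero.mpr (NeZero.ne d))
  -- diagonal sum of Bell states
  have L2 : ∀ nm : ZMod d × ZMod d,
      ∑ j : ZMod d, Φ nm (j, j) = if nm = (0, 0) then ((Real.sqrt d : ℝ) : ℂ) else 0 := by
    intro nm
    have hφ : ∀ j : ZMod d, Φ nm (j, j)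
        = ((1 / Real.sqrt d : ℝ) : ℂ) * (if nm.1 = 0 then ω ^ (nm.2.val * j.val) else 0) := by
      intro j
      show ((1 / Real.sqrt d : ℝ) : ℂ) * (if j = j + nm.1 then _ else 0) = _
      congr 1
      by_cases h : nm.1 = 0
      · simp [h]
      · rw [if_neg h, if_neg (fun hj => h (by simpa using (left_eq_add.mp hj)))]
    rw [Finset.sum_congr rfl (fun j _ => hφ j), ← Finset.mul_sum]
    by_cases hn : nm.1 = 0
    · simp only [hn, if_true]
      by_cases hm : nm.2 = 0
      · have hnm : nm = (0, 0) := Prod.ext hn hm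
        simp only [hnm, eq_self_iff_true, if_true]
        have hone : ∀ j : ZMod d, ω ^ (((0, 0) : ZMod d × ZMod d).2.val * j.val) = 1 := by
          intro j
          have : ((0, 0) : ZMod d × ZMod d).2.val = 0 := ZMod.val_zero
          rw [this, Nat.zero_mul, pow_zero]
        rw [Finset.sum_congr rfl (fun j _ => hone j), Finset.sum_const, Finset.card_univ,
          ZMod.card, nsmul_eq_mul, mul_one]
        norm_cast
        field_simp
        rw [Real.sq_sqrt (le_of_lt hdpos)]
      · rw [hgeom nm.2 hm, mul_zero, eq_comm, if_neg (fun h => hm (by rw [h]))]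
    · rw [if_neg (fun h => hn (by rw [h]))]
      simp [hn]
  -- the witness family
  set v : ZMod d × ZMod d → (ZMod d × ZMod d → ℂ) := fun ij x =>
    (if x = (ij.2, ij.1) then 1 else 0) - (if x = ij then 1 else 0) with hv
  -- quadratic form for each witness
  have hQF : ∀ ij : ZMod d × ZMod d, star (v ij) ⬝ᵥ ρTB.mulVec (v ij)
      = ρTB (ij.2, ij.1) (ij.2, ij.1) - ρTB (ij.2, ij.1) ij
        - ρTB ij (ij.2, ij.1) + ρTB ij ij := by
    intro ij
    have hstar : ∀ x, star (v ij) x = v ij x := by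
      intro x
      simp only [Pi.star_apply, hv, star_sub, apply_ite (star : ℂ → ℂ), star_one, star_zero]
    have hmv : ∀ x, ρTB.mulVec (v ij) x = ρTB x (ij.2, ij.1) - ρTB x ij := by
      intro x
      simp only [Matrix.mulVec, dotProduct, hv, mul_sub, mul_ite, mul_one, mul_zero]
      rw [Finset.sum_sub_distrib, Finset.sum_ite_eq' Finset.univ, Finset.sum_ite_eq' Finset.univ]
      simp
    have hvs : (∑ x : ZMod d × ZMod d, v ij x * (ρTB x (ij.2, ij.1) - ρTB x ij))
        = (ρTB (ij.2, ij.1) (ij.2, ij.1) - ρTB (ij.2, ij.1) ij)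
          - (ρTB ij (ij.2, ij.1) - ρTB ij ij) := by
      simp only [hv, sub_mul, ite_mul, one_mul, zero_mul]
      rw [Finset.sum_sub_distrib, Finset.sum_ite_eq' Finset.univ, Finset.sum_ite_eq' Finset.univ]
      simp
    calc star (v ij) ⬝ᵥ ρTB.mulVec (v ij)
        = ∑ x : ZMod d × ZMod d, v ij x * (ρTB x (ij.2, ij.1) - ρTB x ij) := by
          simp only [dotProduct]
          exact Finset.sum_congr rfl fun x _ => by rw [hstar, hmv]
      _ = (ρTB (ij.2, ij.1) (ij.2, ij.1) - ρTB (ij.2, ij.1) ij)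
          - (ρTB ij (ij.2, ij.1) - ρTB ij ij) := hvs
      _ = ρTB (ij.2, ij.1) (ij.2, ij.1) - ρTB (ij.2, ij.1) ij
          - ρTB ij (ij.2, ij.1) + ρTB ij ij := by ring
  -- total of quadratic forms
  have hsumQ : ∑ ij : ZMod d × ZMod d, star (v ij) ⬝ᵥ ρTB.mulVec (v ij)
      = ((2 - 2 * d * p (0, 0) : ℝ) : ℂ) := by
    rw [Finset.sum_congr rfl (fun ij _ => hQF ij)]
    have htrace : ∀ x : ZMod d × ZMod d, ρ x x
        = ∑ nm : ZMod d × ZMod d, (p nm : ℂ) * (Φ nm x * (starRingEnd ℂ) (Φ nm x)) := by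
      intro x
      show (∑ nm : ZMod d × ZMod d, (p nm : ℂ) * Φ nm x * (starRingEnd ℂ) (Φ nm x)) = _
      exact Finset.sum_congr rfl (fun nm _ => by ring)
    have htr : ∑ x : ZMod d × ZMod d, ρ x x = 1 := by
      rw [Finset.sum_congr rfl (fun x _ => htrace x), Finset.sum_comm]
      rw [Finset.sum_congr rfl (fun nm _ => by rw [← Finset.mul_sum, L1 nm, mul_one])]
      exact_mod_cast hsum
    have hT1 : ∑ ij : ZMod d × ZMod d, ρTB (ij.2, ij.1) (ij.2, ij.1) = 1 := by
      have heq : ∀ ij : ZMod d × ZMod d, ρTB (ij.2, ij.1) (ij.2, ij.1)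
          = ρ (ij.2, ij.1) (ij.2, ij.1) := fun ij => rfl
      rw [Finset.sum_congr rfl (fun ij _ => heq ij),
        show (∑ ij : ZMod d × ZMod d, ρ (ij.2, ij.1) (ij.2, ij.1))
          = ∑ x : ZMod d × ZMod d, ρ x x from
        Fintype.sum_equiv (Equiv.prodComm _ _) _ _ (fun ij => rfl)]
      exact htr
    have hT4 : ∑ ij : ZMod d × ZMod d, ρTB ij ij = 1 := by
      have heq : ∀ ij : ZMod d × ZMod d, ρTB ij ij = ρ ij ij := fun ij => rfl
      rw [Finset.sum_congr rfl (fun ij _ => heq ij)]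
      exact htr
    have hcross : ∑ ij : ZMod d × ZMod d, ρ (ij.1, ij.1) (ij.2, ij.2)
        = (((d : ℝ) * p (0, 0) : ℝ) : ℂ) := by
      have expand : ∀ ij : ZMod d × ZMod d, ρ (ij.1, ij.1) (ij.2, ij.2)
          = ∑ nm : ZMod d × ZMod d,
              (p nm : ℂ) * (Φ nm (ij.1, ij.1) * (starRingEnd ℂ) (Φ nm (ij.2, ij.2))) := by
        intro ij
        show (∑ nm : ZMod d × ZMod d, (p nm : ℂ) * Φ nm (ij.1, ij.1)
            * (starRingEnd ℂ) (Φ nm (ij.2, ij.2))) = _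
        exact Finset.sum_congr rfl (fun nm _ => by ring)
      rw [Finset.sum_congr rfl (fun ij _ => expand ij), Finset.sum_comm]
      have inner : ∀ nm : ZMod d × ZMod d,
          ∑ ij : ZMod d × ZMod d,
            (p nm : ℂ) * (Φ nm (ij.1, ij.1) * (starRingEnd ℂ) (Φ nm (ij.2, ij.2)))
          = (p nm : ℂ) * ((∑ a : ZMod d, Φ nm (a, a))
              * (starRingEnd ℂ) (∑ b : ZMod d, Φ nm (b, b))) := by
        intro nm
        rw [← Finset.mul_sum, Fintype.sum_prod_type, map_sum, Finset.sum_mul_sum]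
      rw [Finset.sum_congr rfl (fun nm _ => inner nm),
        Finset.sum_congr rfl (fun nm _ => by rw [L2 nm])]
      rw [Fintype.sum_eq_single (((0 : ZMod d), (0 : ZMod d)) : ZMod d × ZMod d)
        (fun nm hnm => by rw [if_neg hnm, zero_mul, mul_zero])]
      rw [if_pos rfl, Complex.conj_ofReal]
      norm_cast
      rw [Real.mul_self_sqrt (le_of_lt hdpos)]
      ring
    have hT2 : ∑ ij : ZMod d × ZMod d, ρTB (ij.2, ij.1) ij
        = (((d : ℝ) * p (0, 0) : ℝ) : ℂ) := by
      have heq : ∀ ij : ZMod d × ZMod d, ρTB (ij.2, ij.1) ij = ρ (ij.2, ij.2) (ij.1, ij.1) :=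
        fun ij => rfl
      rw [Finset.sum_congr rfl (fun ij _ => heq ij),
        show (∑ ij : ZMod d × ZMod d, ρ (ij.2, ij.2) (ij.1, ij.1))
          = ∑ ij : ZMod d × ZMod d, ρ (ij.1, ij.1) (ij.2, ij.2) from
        Fintype.sum_equiv (Equiv.prodComm _ _) _ _ (fun ij => rfl)]
      exact hcross
    have hT3 : ∑ ij : ZMod d × ZMod d, ρTB ij (ij.2, ij.1)
        = (((d : ℝ) * p (0, 0) : ℝ) : ℂ) := by
      have heq : ∀ ij : ZMod d × ZMod d, ρTB ij (ij.2, ij.1) = ρ (ij.1, ij.1) (ij.2, ij.2) :=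
        fun ij => rfl
      rw [Finset.sum_congr rfl (fun ij _ => heq ij)]
      exact hcross
    rw [Finset.sum_add_distrib, Finset.sum_sub_distrib, Finset.sum_sub_distrib,
      hT1, hT2, hT3, hT4]
    push_cast
    ring
  -- conclude
  have hneg : ∑ ij : ZMod d × ZMod d, (star (v ij) ⬝ᵥ ρTB.mulVec (v ij)).re < 0 := by
    have hre : (∑ ij : ZMod d × ZMod d, star (v ij) ⬝ᵥ ρTB.mulVec (v ij)).re
        = ∑ ij : ZMod d × ZMod d, (star (v ij) ⬝ᵥ ρTB.mulVec (v ij)).re :=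
      Complex.re_sum _ _
    rw [← hre, hsumQ, Complex.ofReal_re]
    have h1 : 1 < (d : ℝ) * p (0, 0) := by
      rw [gt_iff_lt, div_lt_iff₀ hdpos] at hfid
      linarith [hfid]
    linarith
  by_contra hcon
  push_neg at hcon
  exact absurd (Finset.sum_nonneg (fun ij _ => hcon (v ij))) (not_le.mpr hneg)
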